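/- Let s ≥ 3 and g ≥ 2 be integers and set r = 2s. For each integer j with 0 ≤ j ≤ s, let U_j = {0, 1, …, s} \ {j} and let Π_j denote the product over all unordered pairs {a, b} of distinct elements of U_j of 16·sin²(π(a−b)/r)·sin²(π(a+b)/r). Then 2·[ Σ_{j=1}^{s−1} (4·r^s / Π_j)^{g−1} + 2^{1−2g}·( (4·r^s / Π_0)^{g−1} + (4·r^s / Π_s)^{g−1} ) ] = r^g. -/

import Mathlib

open Real Finset

/-- `Π_j` for the root system `D_s` at level 2: the product over unordered pairs
`{a,b}` of distinct elements of `U_j = {0,…,s} \ {j}` of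
`16·sin²(π(a−b)/(2s))·sin²(π(a+b)/(2s))`. -/
noncomputable def PiDs (s j : ℕ) : ℝ :=
  ∏ p ∈ ((Finset.range (s + 1)).erase j).offDiag.filter (fun p => p.1 < p.2),
    (16 * Real.sin (Real.pi * ((p.1 : ℝ) - (p.2 : ℝ)) / (2 * s)) ^ 2 *
      Real.sin (Real.pi * ((p.1 : ℝ) + (p.2 : ℝ)) / (2 * s)) ^ 2)

lemma prod_two_sub_cos (n : ℕ) :
    ∏ k ∈ range n, (2 - 2 * Real.cos (2 * π * (k + 1) / (n + 1))) = ((n : ℝ) + 1) ^ 2 := by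
  have h := (Complex.isPrimitiveRoot_exp (n+1) (Nat.succ_ne_zero n)).prod_one_sub_pow_eq_order
  have h2 := congrArg Complex.normSq h
  rw [map_prod] at h2
  simp only [Nat.cast_add, Nat.cast_one] at h2
  have key : ∀ k ∈ range n,
      Complex.normSq (1 - Complex.exp (2 * π * Complex.I / (n+1)) ^ (k+1)) =
      2 - 2 * Real.cos (2 * π * (k + 1) / (n + 1)) := by
    intro k _
    have : Complex.exp (2 * π * Complex.I / (n+1)) ^ (k+1)
        = Complex.exp ((2 * π * (k+1) / (n+1) : ℝ) * Complex.I) := by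
      rw [← Complex.exp_nat_mul]
      congr 1
      push_cast
      ring
    rw [this, Complex.normSq_apply]
    simp only [Complex.sub_re, Complex.sub_im, Complex.one_re, Complex.one_im,
      Complex.exp_ofReal_mul_I_re, Complex.exp_ofReal_mul_I_im]
    have := Real.sin_sq_add_cos_sq (2 * π * (k+1) / (n+1))
    nlinarith [this]
  rw [Finset.prod_congr rfl key] at h2
  rw [h2]
  simp [Complex.normSq_apply]
  push_cast
  ring

noncomputable def Fv (s m : ℕ) : ℝ := 4 * Real.sin (π * m / (2 * s)) ^ 2

noncomputable def Rv (s n : ℕ) : ℝ := ∏ v ∈ Finset.range n, Fv s (v + 1)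

lemma Fv_eq_cos (s m : ℕ) : Fv s m = 2 - 2 * Real.cos (2 * π * m / (2 * s)) := by
  have h : 2 * π * m / (2 * s) = 2 * (π * m / (2 * s)) := by ring
  rw [Fv, h, Real.cos_two_mul]
  have := Real.sin_sq_add_cos_sq (π * m / (2 * s))
  nlinarith [this]

lemma Fv_symm (s m : ℕ) (hs : 0 < s) (hm : m ≤ 2 * s) : Fv s (2 * s - m) = Fv s m := by
  unfold Fv
  have hc : ((2 * s - m : ℕ) : ℝ) = 2 * s - m := by
    push_cast [hm]; ring
  rw [hc]
  have hs' : (2 * (s:ℝ)) ≠ 0 := by positivity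
  have : π * (2 * (s:ℝ) - m) / (2 * s) = π - π * m / (2 * s) := by
    field_simp
  rw [this, Real.sin_pi_sub]

lemma Fv_pos (s m : ℕ) (h1 : 0 < m) (h2 : m < 2 * s) : 0 < Fv s m := by
  have hs : 0 < s := by omega
  have h : 0 < π * m / (2 * s) := by
    have : (0:ℝ) < m := by exact_mod_cast h1
    have : (0:ℝ) < s := by exact_mod_cast hs
    positivity
  have h' : π * m / (2 * s) < π := by
    rw [div_lt_iff₀ (by positivity)]
    have hm : (m : ℝ) < 2 * s := by exact_mod_cast h2
    nlinarith [Real.pi_pos]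
  have := Real.sin_pos_of_pos_of_lt_pi h h'
  unfold Fv; nlinarith [this]

lemma Rv_pos (s n : ℕ) (hn : n ≤ 2 * s - 1) (hs : 0 < s) : 0 < Rv s n := by
  apply Finset.prod_pos
  intro v hv
  simp only [Finset.mem_range] at hv
  exact Fv_pos s (v+1) (by omega) (by omega)

lemma Rv_succ (s n : ℕ) : Rv s (n + 1) = Rv s n * Fv s (n + 1) := Finset.prod_range_succ _ n

lemma Rv_eq_Ico (s n : ℕ) : Rv s n = ∏ v ∈ Finset.Ico 1 (n + 1), Fv s v := by
  rw [Finset.prod_Ico_eq_prod_range]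
  simp only [Nat.add_sub_cancel]
  exact Finset.prod_congr rfl fun v _ => by rw [Nat.add_comm]

lemma Rv_A (s : ℕ) (hs : 0 < s) : Rv s (2 * s - 1) = 4 * s ^ 2 := by
  have hc : ((2 * s - 1 : ℕ) : ℝ) = 2 * s - 1 := by
    have h : (1:ℕ) ≤ 2 * s := by omega
    push_cast [h]; ring
  unfold Rv
  have key : ∀ v ∈ range (2 * s - 1), Fv s (v + 1)
      = 2 - 2 * Real.cos (2 * π * (v + 1) / ((2 * s - 1 : ℕ) + 1)) := by
    intro v _
    rw [Fv_eq_cos]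
    congr 3
    rw [hc]; push_cast; ring
  rw [Finset.prod_congr rfl key, prod_two_sub_cos, hc]; ring

lemma prod_range_odd_even (g : ℕ → ℝ) (n : ℕ) :
    ∏ k ∈ range (2 * n + 1), g k
      = (∏ k ∈ range (n + 1), g (2 * k)) * ∏ k ∈ range n, g (2 * k + 1) := by
  induction n with
  | zero => simp
  | succ m ih =>
    rw [show 2 * (m + 1) + 1 = (2 * m + 1) + 1 + 1 from by ring]
    simp only [prod_range_succ, ih]
    rw [show 2 * (m + 1) = 2 * m + 2 from by ring]
    ring

lemma Rv_even (s : ℕ) (hs : 0 < s) : ∏ k ∈ range (s - 1), Fv s (2 * (k + 1)) = (s : ℝ) ^ 2 := by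
  have h1 : ((s - 1 : ℕ) : ℝ) = (s:ℝ) - 1 := by
    have h : (1:ℕ) ≤ s := hs
    push_cast [h]; ring
  have hs' : (s : ℝ) ≠ 0 := by positivity
  have key : ∀ k ∈ range (s - 1), Fv s (2 * (k + 1))
      = 2 - 2 * Real.cos (2 * π * (k + 1) / ((s - 1 : ℕ) + 1)) := by
    intro k _
    rw [Fv_eq_cos]
    congr 2
    rw [h1]
    push_cast
    field_simp
    ring
  rw [Finset.prod_congr rfl key, prod_two_sub_cos, h1]; ring

lemma Rv_odd (s : ℕ) (hs : 0 < s) : ∏ k ∈ range s, Fv s (2 * k + 1) = 4 := by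
  have h := prod_range_odd_even (fun k => Fv s (k + 1)) (s - 1)
  have h2 : 2 * (s - 1) + 1 = 2 * s - 1 := by omega
  have h3 : s - 1 + 1 = s := by omega
  rw [h2, h3] at h
  have h4 : (∏ k ∈ range (s-1), Fv s ((2 * k + 1) + 1)) = ∏ k ∈ range (s-1), Fv s (2 * (k+1)) := by
    apply Finset.prod_congr rfl; intro k _; rw [show 2*k+1+1 = 2*(k+1) from by ring]
  rw [h4, Rv_even s hs] at h
  have hA : Rv s (2 * s - 1) = 4 * s ^ 2 := Rv_A s hs
  unfold Rv at hA
  rw [hA] at h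
  have hs2 : (s : ℝ) ^ 2 ≠ 0 := by positivity
  have h5 : (∏ k ∈ range s, Fv s (2 * k + 1)) * (s:ℝ)^2 = 4 * (s:ℝ)^2 := by linarith
  exact mul_right_cancel₀ hs2 h5

lemma prod_Ico_reflect (s m : ℕ) (hs : 0 < s) (hm : m ≤ 2 * s) :
    ∏ v ∈ Finset.Ico m (2 * s), Fv s v = Rv s (2 * s - m) := by
  rw [Finset.prod_Ico_eq_prod_range]
  unfold Rv
  rw [← Finset.prod_range_reflect (fun j => Fv s (m + j)) (2 * s - m)]
  apply Finset.prod_congr rfl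
  intro j hj
  simp only [Finset.mem_range] at hj
  have h1 : m + (2 * s - m - 1 - j) = 2 * s - (j + 1) := by omega
  rw [h1, Fv_symm s (j+1) hs (by omega)]

-- R(m-1) * R(2s-m) = 4s²  for 1 ≤ m ≤ 2s

lemma Rv_mul_reflect (s m : ℕ) (hs : 0 < s) (h1 : 1 ≤ m) (h2 : m ≤ 2 * s) :
    Rv s (m - 1) * Rv s (2 * s - m) = 4 * s ^ 2 := by
  rw [← prod_Ico_reflect s m hs h2, Rv_eq_Ico]
  have h3 : m - 1 + 1 = m := by omega
  rw [h3, Finset.prod_Ico_consecutive _ h1 h2]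
  rw [← Rv_A s hs, Rv_eq_Ico]
  congr 1 <;> omega

lemma Rv_pred (s n : ℕ) (h : 1 ≤ n) : Rv s n = Rv s (n - 1) * Fv s n := by
  have h2 : n = (n - 1) + 1 := by omega
  rw [h2, Rv, Finset.prod_range_succ, ← Rv, ← h2]

lemma Fv_s (s : ℕ) (hs : 0 < s) : Fv s s = 4 := by
  unfold Fv
  have hs' : (s:ℝ) ≠ 0 := by positivity
  have : π * s / (2 * s) = π / 2 := by field_simp
  rw [this, Real.sin_pi_div_two]; norm_num

lemma Rv_s_sub_one (s : ℕ) (hs : 0 < s) : Rv s (s - 1) = s := by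
  have h := Rv_mul_reflect s s hs hs (by omega)
  have h2 : 2 * s - s = s := by omega
  rw [h2] at h
  have h3 : Rv s s = Rv s (s - 1) * Fv s s := Rv_pred s s hs
  rw [h3, Fv_s s hs] at h
  have hp : 0 < Rv s (s - 1) := Rv_pos s (s-1) (by omega) hs
  have hs' : (0:ℝ) < s := by exact_mod_cast hs
  nlinarith [h, hp, hs']

lemma Rv_s (s : ℕ) (hs : 0 < s) : Rv s s = 4 * s := by
  have h3 : Rv s s = Rv s (s - 1) * Fv s s := Rv_pred s s hs
  rw [h3, Fv_s s hs, Rv_s_sub_one s hs]; ring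

-- R m * R(2s - m) = 4s² * F m   for 1 ≤ m ≤ 2s - 1

lemma Rv_pair (s m : ℕ) (hs : 0 < s) (h1 : 1 ≤ m) (h2 : m ≤ 2 * s - 1) :
    Rv s m * Rv s (2 * s - m) = 4 * s ^ 2 * Fv s m := by
  have h3 : Rv s m = Rv s (m - 1) * Fv s m := Rv_pred s m h1
  rw [h3, mul_comm (Rv s (m-1)) (Fv s m), mul_assoc, Rv_mul_reflect s m hs h1 (by omega)]
  ring

def Pairs (t : Finset ℕ) : Finset (ℕ × ℕ) := t.offDiag.filter fun p => p.1 < p.2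

lemma mem_Pairs (t : Finset ℕ) (p : ℕ × ℕ) :
    p ∈ Pairs t ↔ p.1 ∈ t ∧ p.2 ∈ t ∧ p.1 < p.2 := by
  simp only [Pairs, Finset.mem_filter, Finset.mem_offDiag]
  constructor
  · rintro ⟨⟨h1, h2, h3⟩, h4⟩; exact ⟨h1, h2, h4⟩
  · rintro ⟨h1, h2, h4⟩; exact ⟨⟨h1, h2, by omega⟩, h4⟩

lemma prod_Pairs_range (f : ℕ → ℕ → ℝ) (n : ℕ) :
    ∏ p ∈ Pairs (range n), f p.1 p.2 = ∏ b ∈ range n, ∏ a ∈ range b, f a b := by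
  induction n with
  | zero => simp [Pairs]
  | succ m ih =>
    have hsplit : Pairs (range (m+1))
        = Pairs (range m) ∪ (range m).image (fun a => (a, m)) := by
      ext ⟨a, b⟩
      simp only [mem_Pairs, Finset.mem_range, Finset.mem_union, Finset.mem_image, Prod.mk.injEq]
      constructor
      · rintro ⟨h1, h2, h3⟩
        by_cases hb : b = m
        · right; exact ⟨a, by omega, rfl, hb.symm⟩
        · left; exact ⟨by omega, by omega, h3⟩
      · rintro (⟨h1, h2, h3⟩ | ⟨x, hx, rfl, rfl⟩)
        · exact ⟨by omega, by omega, h3⟩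
        · exact ⟨by omega, by omega, by omega⟩
    have hdisj : Disjoint (Pairs (range m)) ((range m).image (fun a => (a, m))) := by
      rw [Finset.disjoint_left]
      rintro ⟨a, b⟩ hp hq
      simp only [mem_Pairs, Finset.mem_range] at hp
      simp only [Finset.mem_image, Prod.mk.injEq] at hq
      obtain ⟨x, hx, rfl, rfl⟩ := hq
      omega
    rw [hsplit, Finset.prod_union hdisj, ih, Finset.prod_range_succ,
      Finset.prod_image (by intro x _ y _ h; exact (Prod.mk.injEq _ _ _ _).mp h |>.1)]

lemma prod_Pairs_erase (f : ℕ → ℕ → ℝ) (t : Finset ℕ) (j : ℕ) (hj : j ∈ t) :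
    ∏ p ∈ Pairs t, f p.1 p.2
      = (∏ p ∈ Pairs (t.erase j), f p.1 p.2)
        * ∏ b ∈ t.erase j, (if b < j then f b j else f j b) := by
  have hsplit : Pairs t
      = Pairs (t.erase j) ∪ (t.erase j).image (fun b => if b < j then (b, j) else (j, b)) := by
    ext ⟨a, b⟩
    simp only [mem_Pairs, Finset.mem_union, Finset.mem_image, Finset.mem_erase]
    constructor
    · rintro ⟨h1, h2, h3⟩
      by_cases ha : a = j
      · right; exact ⟨b, ⟨by omega, h2⟩, by subst ha; rw [if_neg (by omega)]⟩
      · by_cases hb : b = j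
        · right; refine ⟨a, ⟨by omega, h1⟩, by subst hb; rw [if_pos h3]⟩
        · left; exact ⟨⟨ha, h1⟩, ⟨hb, h2⟩, h3⟩
    · rintro (⟨⟨_, h1⟩, ⟨_, h2⟩, h3⟩ | ⟨x, ⟨hxj, hxt⟩, hx⟩)
      · exact ⟨h1, h2, h3⟩
      · split_ifs at hx with hlt
        · rw [Prod.mk.injEq] at hx
          obtain ⟨rfl, rfl⟩ := hx
          exact ⟨hxt, hj, hlt⟩
        · rw [Prod.mk.injEq] at hx
          obtain ⟨rfl, rfl⟩ := hx
          exact ⟨hj, hxt, by omega⟩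
  have hdisj : Disjoint (Pairs (t.erase j))
      ((t.erase j).image (fun b => if b < j then (b, j) else (j, b))) := by
    rw [Finset.disjoint_left]
    rintro ⟨a, b⟩ hp hq
    simp only [mem_Pairs, Finset.mem_erase] at hp
    simp only [Finset.mem_image, Finset.mem_erase] at hq
    obtain ⟨x, ⟨hxj, _⟩, hx⟩ := hq
    split_ifs at hx with hlt <;> rw [Prod.mk.injEq] at hx <;>
      obtain ⟨rfl, rfl⟩ := hx
    · exact hp.2.1.1 rfl
    · exact hp.1.1 rfl
  have hinj : ∀ x ∈ t.erase j, ∀ y ∈ t.erase j,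
      (fun b => if b < j then (b, j) else (j, b)) x
        = (fun b => if b < j then (b, j) else (j, b)) y → x = y := by
    intro x hx y hy h
    simp only [Finset.mem_erase] at hx hy
    simp only [] at h
    split_ifs at h <;> rw [Prod.mk.injEq] at h <;> omega
  rw [hsplit, Finset.prod_union hdisj, Finset.prod_image hinj]
  congr 1
  apply Finset.prod_congr rfl
  intro b _
  split_ifs <;> rfl

lemma prod_range_sub (s b : ℕ) : ∏ a ∈ range b, Fv s (b - a) = Rv s b := by
  unfold Rv
  rw [← Finset.prod_range_reflect (fun a => Fv s (a + 1)) b]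
  apply Finset.prod_congr rfl
  intro a ha
  simp only [Finset.mem_range] at ha
  congr 1
  omega

lemma prod_range_add (s b : ℕ) : ∏ a ∈ range b, Fv s (a + b) = ∏ v ∈ Finset.Ico b (2 * b), Fv s v := by
  rw [Finset.prod_Ico_eq_prod_range]
  have h : 2 * b - b = b := by omega
  rw [h]
  apply Finset.prod_congr rfl
  intro a _
  congr 1
  omega

lemma Dval (s : ℕ) (hs : 0 < s) :
    ∏ p ∈ Pairs (range (s + 1)), (Fv s (p.2 - p.1) * Fv s (p.1 + p.2)) = 4 * (2 * (s:ℝ)) ^ (s + 1) := by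
  rw [prod_Pairs_range (fun a b => Fv s (b - a) * Fv s (a + b))]
  have hterm : ∀ b ∈ range (s + 1), ∏ a ∈ range b, (Fv s (b - a) * Fv s (a + b))
      = (if b = 0 then 1 else Fv s b * Rv s (2 * b - 1)) := by
    intro b hb
    simp only [Finset.mem_range] at hb
    rcases Nat.eq_zero_or_pos b with rfl | hbpos
    · simp
    · rw [if_neg (by omega)]
      rw [Finset.prod_mul_distrib, prod_range_sub, prod_range_add]
      -- Rv s b * ∏_{Ico b (2b)} = F b * Rv(2b-1)
      rw [Rv_eq_Ico s b, Finset.prod_Ico_succ_top (by omega : 1 ≤ b)]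
      have hc : (Finset.Ico 1 b).prod (Fv s) * Fv s b * (Finset.Ico b (2*b)).prod (Fv s)
          = Fv s b * ((Finset.Ico 1 b).prod (Fv s) * (Finset.Ico b (2*b)).prod (Fv s)) := by ring
      rw [hc, Finset.prod_Ico_consecutive _ (by omega : 1 ≤ b) (by omega : b ≤ 2 * b)]
      rw [Rv_eq_Ico, show 2 * b - 1 + 1 = 2 * b from by omega]
  rw [Finset.prod_congr rfl hterm]
  rw [Finset.prod_range_succ' (fun b => if b = 0 then (1:ℝ) else Fv s b * Rv s (2 * b - 1)) s]
  simp only [if_neg (Nat.succ_ne_zero _), if_pos rfl, mul_one]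
  have hsplit : ∏ b ∈ range s, (Fv s (b+1) * Rv s (2 * (b+1) - 1))
      = (∏ b ∈ range s, Fv s (b+1)) * ∏ b ∈ range s, Rv s (2 * b + 1) := by
    rw [← Finset.prod_mul_distrib]
    apply Finset.prod_congr rfl
    intro b _
    rw [show 2 * (b + 1) - 1 = 2 * b + 1 from by omega]
  rw [hsplit, ← Rv]
  -- W := ∏ Rv(2b+1)
  set W := ∏ b ∈ range s, Rv s (2 * b + 1) with hW
  have hWsq : W ^ 2 = (2 * (2 * (s:ℝ)) ^ s) ^ 2 := by
    have hrefl : W = ∏ k ∈ range s, Rv s (2 * s - (2 * k + 1)) := by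
      rw [hW, ← Finset.prod_range_reflect (fun k => Rv s (2 * k + 1)) s]
      apply Finset.prod_congr rfl
      intro k hk
      simp only [Finset.mem_range] at hk
      congr 1
      omega
    have : W ^ 2 = ∏ k ∈ range s, (Rv s (2 * k + 1) * Rv s (2 * s - (2 * k + 1))) := by
      rw [Finset.prod_mul_distrib, ← hW, ← hrefl]; ring
    rw [this]
    have : ∀ k ∈ range s, Rv s (2 * k + 1) * Rv s (2 * s - (2 * k + 1))
        = 4 * (s:ℝ) ^ 2 * Fv s (2 * k + 1) := by
      intro k hk
      simp only [Finset.mem_range] at hk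
      exact Rv_pair s (2 * k + 1) hs (by omega) (by omega)
    rw [Finset.prod_congr rfl this, Finset.prod_mul_distrib, Finset.prod_const, Rv_odd s hs,
      Finset.card_range]
    rw [show (4 * (s:ℝ)^2) = (2 * s)^2 from by ring, ← pow_mul]
    rw [show (2 * (2 * (s:ℝ)) ^ s) ^ 2 = 4 * ((2*(s:ℝ))^s)^2 from by ring, ← pow_mul]
    ring
  have hWpos : 0 < W := by
    apply Finset.prod_pos
    intro k hk
    simp only [Finset.mem_range] at hk
    exact Rv_pos s (2 * k + 1) (by omega) hs
  have hcpos : (0:ℝ) < 2 * (2 * (s:ℝ)) ^ s := by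
    have : (0:ℝ) < s := by exact_mod_cast hs
    positivity
  have hWval : W = 2 * (2 * (s:ℝ)) ^ s := by nlinarith [hWsq, hWpos, hcpos]
  rw [hWval, Rv_s s hs]
  rw [pow_succ]
  norm_num
  ring

lemma Fv_double (s j : ℕ) (hs : 0 < s) (hj : j ≤ s) : Fv s j * Fv s (s - j) = Fv s (2 * j) := by
  unfold Fv
  have hc : ((s - j : ℕ) : ℝ) = (s : ℝ) - j := by
    push_cast [hj]; ring
  rw [hc]
  have hs' : (s:ℝ) ≠ 0 := by positivity
  have h1 : π * ((s:ℝ) - j) / (2 * s) = π / 2 - π * j / (2 * s) := by field_simp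
  rw [h1, Real.sin_pi_div_two_sub]
  have h2 : π * (2 * j : ℕ) / (2 * s) = 2 * (π * j / (2 * s)) := by push_cast; field_simp
  rw [h2, Real.sin_two_mul]
  ring

-- E_j value for 1 ≤ j ≤ s - 1

lemma Emid (s j : ℕ) (hs : 0 < s) (h1 : 1 ≤ j) (h2 : j ≤ s - 1) :
    ∏ b ∈ (range (s + 1)).erase j,
      (if b < j then Fv s (j - b) * Fv s (b + j) else Fv s (b - j) * Fv s (j + b))
      = 4 * (s:ℝ) ^ 2 := by
  have hsplit : (range (s + 1)).erase j = range j ∪ Finset.Ico (j + 1) (s + 1) := by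
    ext b
    simp only [Finset.mem_erase, Finset.mem_range, Finset.mem_union, Finset.mem_Ico]
    omega
  have hdisj : Disjoint (range j) (Finset.Ico (j + 1) (s + 1)) := by
    rw [Finset.disjoint_left]
    intro b hb hb'
    simp only [Finset.mem_range] at hb
    simp only [Finset.mem_Ico] at hb'
    omega
  rw [hsplit, Finset.prod_union hdisj]
  have hpart1 : ∏ b ∈ range j, (if b < j then Fv s (j - b) * Fv s (b + j) else Fv s (b - j) * Fv s (j + b))
      = Rv s j * ∏ v ∈ Finset.Ico j (2 * j), Fv s v := by
    rw [Finset.prod_congr rfl (fun b hb => if_pos (Finset.mem_range.mp hb)),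
      Finset.prod_mul_distrib, prod_range_sub, prod_range_add]
  have hpart2 : ∏ b ∈ Finset.Ico (j + 1) (s + 1),
        (if b < j then Fv s (j - b) * Fv s (b + j) else Fv s (b - j) * Fv s (j + b))
      = Rv s (s - j) * ∏ v ∈ Finset.Ico (2 * j + 1) (s + j + 1), Fv s v := by
    have h : ∀ b ∈ Finset.Ico (j + 1) (s + 1),
        (if b < j then Fv s (j - b) * Fv s (b + j) else Fv s (b - j) * Fv s (j + b))
        = Fv s (b - j) * Fv s (j + b) := by
      intro b hb
      simp only [Finset.mem_Ico] at hb
      rw [if_neg (by omega)]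
    rw [Finset.prod_congr rfl h, Finset.prod_Ico_eq_prod_range, Finset.prod_mul_distrib]
    rw [show s + 1 - (j + 1) = s - j from by omega]
    congr 1
    · unfold Rv
      apply Finset.prod_congr rfl
      intro v _
      rw [show j + 1 + v - j = v + 1 from by omega]
    · rw [Finset.prod_Ico_eq_prod_range, show s + j + 1 - (2 * j + 1) = s - j from by omega]
      apply Finset.prod_congr rfl
      intro v _
      rw [show j + (j + 1 + v) = 2 * j + 1 + v from by omega]
  rw [hpart1, hpart2]
  set X1 := ∏ v ∈ Finset.Ico j (2 * j), Fv s v with hX1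
  set X2 := ∏ v ∈ Finset.Ico (2 * j + 1) (s + j + 1), Fv s v with hX2
  have hkey : X1 * X2 * (Fv s (2 * j) * Rv s (s - j - 1)) = Rv s (2 * s - j) := by
    have ha : X1 * Fv s (2 * j) = ∏ v ∈ Finset.Ico j (2 * j + 1), Fv s v := by
      rw [Finset.prod_Ico_succ_top (by omega : j ≤ 2 * j)]
    have hb : (∏ v ∈ Finset.Ico j (2 * j + 1), Fv s v) * X2
        = ∏ v ∈ Finset.Ico j (s + j + 1), Fv s v :=
      Finset.prod_Ico_consecutive _ (by omega) (by omega)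
    have hd : Rv s (s - j - 1) = ∏ v ∈ Finset.Ico (s + j + 1) (2 * s), Fv s v := by
      rw [prod_Ico_reflect s (s + j + 1) hs (by omega), show 2 * s - (s + j + 1) = s - j - 1 from by omega]
    have hc : (∏ v ∈ Finset.Ico j (s + j + 1), Fv s v) * (∏ v ∈ Finset.Ico (s + j + 1) (2 * s), Fv s v)
        = Rv s (2 * s - j) := by
      rw [Finset.prod_Ico_consecutive _ (by omega) (by omega), prod_Ico_reflect s j hs (by omega)]
    calc X1 * X2 * (Fv s (2 * j) * Rv s (s - j - 1))
        = (X1 * Fv s (2 * j)) * X2 * Rv s (s - j - 1) := by ring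
      _ = (∏ v ∈ Finset.Ico j (s + j + 1), Fv s v) * Rv s (s - j - 1) := by rw [ha, hb]
      _ = Rv s (2 * s - j) := by rw [hd, hc]
  have hFpos : 0 < Fv s (2 * j) := Fv_pos s (2 * j) (by omega) (by omega)
  have hRpos : 0 < Rv s (s - j - 1) := Rv_pos s (s - j - 1) (by omega) hs
  have hne : Fv s (2 * j) * Rv s (s - j - 1) ≠ 0 := by positivity
  apply mul_right_cancel₀ hne
  calc Rv s j * X1 * (Rv s (s - j) * X2) * (Fv s (2 * j) * Rv s (s - j - 1))
      = Rv s j * Rv s (s - j) * (X1 * X2 * (Fv s (2 * j) * Rv s (s - j - 1))) := by ring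
    _ = Rv s j * Rv s (s - j) * Rv s (2 * s - j) := by rw [hkey]
    _ = (Rv s (j - 1) * Rv s (2 * s - j)) * (Fv s j * Fv s (s - j)) * Rv s (s - j - 1) := by
        rw [Rv_pred s j h1, Rv_pred s (s - j) (by omega), show s - j - 1 = s - j - 1 from rfl]
        ring
    _ = 4 * (s:ℝ) ^ 2 * (Fv s (2 * j) * Rv s (s - j - 1)) := by
        rw [Rv_mul_reflect s j hs h1 (by omega), Fv_double s j hs (by omega)]; ring

lemma PiDs_eq_pairs (s j : ℕ) :
    PiDs s j = ∏ p ∈ Pairs ((Finset.range (s + 1)).erase j), Fv s (p.2 - p.1) * Fv s (p.1 + p.2) := by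
  unfold PiDs Pairs
  apply Finset.prod_congr rfl
  intro p hp
  simp only [Finset.mem_filter] at hp
  obtain ⟨-, hlt⟩ := hp
  unfold Fv
  have hc1 : ((p.2 - p.1 : ℕ) : ℝ) = (p.2 : ℝ) - p.1 := by
    push_cast [Nat.le_of_lt hlt]; ring
  have hc2 : ((p.1 + p.2 : ℕ) : ℝ) = (p.1 : ℝ) + p.2 := by push_cast; ring
  rw [hc1, hc2]
  have h3 : π * ((p.1:ℝ) - p.2) / (2 * s) = -(π * ((p.2:ℝ) - p.1) / (2 * s)) := by ring
  rw [h3, Real.sin_neg]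
  ring

-- E_0

lemma E0 (s : ℕ) (hs : 0 < s) :
    ∏ b ∈ (range (s + 1)).erase 0,
      (if b < 0 then Fv s (0 - b) * Fv s (b + 0) else Fv s (b - 0) * Fv s (0 + b))
      = 16 * (s:ℝ) ^ 2 := by
  have h : (range (s + 1)).erase 0 = Finset.Ico 1 (s + 1) := by
    ext b
    simp only [Finset.mem_erase, Finset.mem_range, Finset.mem_Ico]
    omega
  rw [h]
  have h2 : ∀ b ∈ Finset.Ico 1 (s + 1),
      (if b < 0 then Fv s (0 - b) * Fv s (b + 0) else Fv s (b - 0) * Fv s (0 + b))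
      = Fv s b * Fv s b := by
    intro b hb
    rw [if_neg (by omega)]
    congr 2 <;> omega
  rw [Finset.prod_congr rfl h2, Finset.prod_mul_distrib]
  have h3 : ∏ b ∈ Finset.Ico 1 (s + 1), Fv s b = Rv s s := by
    rw [Rv, Finset.prod_Ico_eq_prod_range]
    simp only [Nat.add_sub_cancel]
    exact Finset.prod_congr rfl fun v _ => by rw [Nat.add_comm]
  rw [h3, Rv_s s hs]
  ring

-- E_s

lemma Es (s : ℕ) (hs : 0 < s) :
    ∏ b ∈ (range (s + 1)).erase s,
      (if b < s then Fv s (s - b) * Fv s (b + s) else Fv s (b - s) * Fv s (s + b))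
      = 16 * (s:ℝ) ^ 2 := by
  have h : (range (s + 1)).erase s = range s := by
    ext b
    simp only [Finset.mem_erase, Finset.mem_range]
    omega
  rw [h]
  have h2 : ∀ b ∈ range s,
      (if b < s then Fv s (s - b) * Fv s (b + s) else Fv s (b - s) * Fv s (s + b))
      = Fv s (s - b) * Fv s (s - b) := by
    intro b hb
    simp only [Finset.mem_range] at hb
    rw [if_pos hb]
    congr 1
    rw [show b + s = 2 * s - (s - b) from by omega] at *
    exact Fv_symm s (s - b) hs (by omega)
  rw [Finset.prod_congr rfl h2, Finset.prod_mul_distrib, prod_range_sub, Rv_s s hs]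
  ring

lemma PiDs_mid (s j : ℕ) (hs : 0 < s) (h1 : 1 ≤ j) (h2 : j ≤ s - 1) :
    PiDs s j = 4 * (2 * (s:ℝ)) ^ (s - 1) := by
  have hj : j ∈ range (s + 1) := by simp only [Finset.mem_range]; omega
  have h := prod_Pairs_erase (fun a b => Fv s (b - a) * Fv s (a + b)) (range (s + 1)) j hj
  rw [Dval s hs] at h
  rw [Emid s j hs h1 h2, ← PiDs_eq_pairs] at h
  have hsR : (0:ℝ) < s := by exact_mod_cast hs
  have hne : (4 * (s:ℝ) ^ 2) ≠ 0 := by positivity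
  apply mul_right_cancel₀ hne
  rw [← h]
  rw [show s + 1 = (s - 1) + 2 from by omega, pow_add]
  ring

lemma PiDs_end (s : ℕ) (hs : 0 < s) : PiDs s 0 = (2 * (s:ℝ)) ^ (s - 1) ∧ PiDs s s = (2 * (s:ℝ)) ^ (s - 1) := by
  have hsR : (0:ℝ) < s := by exact_mod_cast hs
  have hne : (16 * (s:ℝ) ^ 2) ≠ 0 := by positivity
  constructor
  · have hj : (0:ℕ) ∈ range (s + 1) := by simp
    have h := prod_Pairs_erase (fun a b => Fv s (b - a) * Fv s (a + b)) (range (s + 1)) 0 hj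
    rw [Dval s hs] at h
    rw [E0 s hs, ← PiDs_eq_pairs] at h
    apply mul_right_cancel₀ hne
    rw [← h, show s + 1 = (s - 1) + 2 from by omega, pow_add]
    ring
  · have hj : s ∈ range (s + 1) := by simp
    have h := prod_Pairs_erase (fun a b => Fv s (b - a) * Fv s (a + b)) (range (s + 1)) s hj
    rw [Dval s hs] at h
    rw [Es s hs, ← PiDs_eq_pairs] at h
    apply mul_right_cancel₀ hne
    rw [← h, show s + 1 = (s - 1) + 2 from by omega, pow_add]
    ring

/-- the Verlinde number `N_2(SO_{2s})` equals `r^g` where `r = 2s`: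
`2·[ Σ_{j=1}^{s−1} (4·r^s/Π_j)^{g−1} + 2^{1−2g}·((4·r^s/Π_0)^{g−1} + (4·r^s/Π_s)^{g−1}) ] = r^g`. -/
theorem verlinde_SO_even (s g : ℕ) (hs : 3 ≤ s) (hg : 2 ≤ g) :
    2 * ((∑ j ∈ Finset.Icc 1 (s - 1),
          (4 * (2 * (s : ℝ)) ^ s / PiDs s j) ^ (g - 1)) +
        (2 : ℝ) ^ (1 - 2 * (g : ℤ)) *
          ((4 * (2 * (s : ℝ)) ^ s / PiDs s 0) ^ (g - 1) +
            (4 * (2 * (s : ℝ)) ^ s / PiDs s s) ^ (g - 1))) =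
      (2 * (s : ℝ)) ^ g := by
  have hs0 : 0 < s := by omega
  have hsR : (0:ℝ) < s := by exact_mod_cast hs0
  have hr : (0:ℝ) < 2 * s := by linarith
  obtain ⟨h0, hss⟩ := PiDs_end s hs0
  have hpow : (2 * (s:ℝ)) ^ s = (2 * (s:ℝ)) ^ (s - 1) * (2 * s) := by
    rw [← pow_succ, show s - 1 + 1 = s from by omega]
  have hterm0 : 4 * (2 * (s : ℝ)) ^ s / PiDs s 0 = 4 * (2 * s) := by
    rw [h0, hpow]
    field_simp
  have hterms : 4 * (2 * (s : ℝ)) ^ s / PiDs s s = 4 * (2 * s) := by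
    rw [hss, hpow]
    field_simp
  have htermj : ∀ j ∈ Finset.Icc 1 (s - 1), (4 * (2 * (s : ℝ)) ^ s / PiDs s j) ^ (g - 1)
      = (2 * (s:ℝ)) ^ (g - 1) := by
    intro j hj
    simp only [Finset.mem_Icc] at hj
    rw [PiDs_mid s j hs0 hj.1 hj.2, hpow]
    congr 1
    field_simp
  rw [Finset.sum_congr rfl htermj, Finset.sum_const, Nat.card_Icc, hterm0, hterms]
  have hcard : (s - 1 + 1 - 1) = s - 1 := by omega
  rw [hcard]
  -- 2^(1-2g) * (2 * (4*(2s))^(g-1)) = 2 * (2s)^(g-1)  ... combine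
  have hpow2 : ((4:ℝ) * (2 * s)) ^ (g - 1) = 4 ^ (g - 1) * (2 * (s:ℝ)) ^ (g - 1) := by
    rw [mul_pow]
  have h4 : (4:ℝ) ^ (g - 1) = (2:ℝ) ^ (2 * (g - 1)) := by
    rw [pow_mul]; norm_num
  have hz : (2:ℝ) ^ (1 - 2 * (g:ℤ)) * (2:ℝ) ^ (2 * (g - 1)) = 1 / 2 := by
    rw [show ((2:ℝ) ^ (2 * (g - 1)) : ℝ) = (2:ℝ) ^ ((2 * (g - 1) : ℕ) : ℤ) from by
      rw [zpow_natCast]]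
    rw [← zpow_add₀ (by norm_num : (2:ℝ) ≠ 0)]
    have : 1 - 2 * (g:ℤ) + ((2 * (g - 1) : ℕ) : ℤ) = -1 := by
      have : ((2 * (g - 1) : ℕ) : ℤ) = 2 * (g:ℤ) - 2 := by
        push_cast [Nat.le_sub_one_of_lt (by omega : 1 < g)]
        omega
      omega
    rw [this]
    norm_num
  have hsm : ((s:ℝ) - 1) * (2 * (s:ℝ)) ^ (g - 1) + (2:ℝ) ^ (1 - 2 * (g:ℤ)) *
      ((4 * (2 * (s:ℝ))) ^ (g - 1) + (4 * (2 * (s:ℝ))) ^ (g - 1))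
      = (s:ℝ) * (2 * s) ^ (g - 1) := by
    rw [hpow2, h4]
    have := hz
    nlinarith [this, pow_pos hr (g - 1)]
  have hcast : ((s - 1 : ℕ) : ℝ) = (s:ℝ) - 1 := by
    push_cast [show (1:ℕ) ≤ s from by omega]; ring
  rw [nsmul_eq_mul, hcast, hsm]
  rw [show (2 * (s:ℝ)) ^ g = (2 * (s:ℝ)) ^ (g - 1) * (2 * (s:ℝ)) from by
    rw [← pow_succ, show g - 1 + 1 = g from by omega]]
  ring
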